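/- arXiv:1907.12909 — 3 statements merged into one kernel-verified Lean document; each statement's English description precedes it below -/
import Mathlib

section
/- Let m be a positive integer and let c_1, c_2, ..., c_m be pairwise distinct positive integers with maximum c*. Then the sum over j of the ceiling of c_j/m is at most c*, i.e., ∑_{j=1}^{m} ⌈c_j/m⌉ ≤ c*. -/
/-- Hermite-type identity: `∑_{k<m} ⌊(x+k)/m⌋ = x`. -/
lemma hermite_sum (m : ℕ) (hm : 0 < m) (x : ℕ) :
    ∑ k ∈ Finset.range m, (x + k) / m = x := by
  obtain ⟨q, r, hr, rfl⟩ : ∃ q r, r < m ∧ x = m * q + r :=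
    ⟨x / m, x % m, Nat.mod_lt _ hm, (Nat.div_add_mod x m).symm⟩
  have h1 : ∀ k, (m * q + r + k) / m = q + (r + k) / m := by
    intro k; rw [add_assoc, Nat.mul_add_div hm]
  simp only [h1, Finset.sum_add_distrib, Finset.sum_const, Finset.card_range, smul_eq_mul]
  have h2 : ∑ k ∈ Finset.range m, (r + k) / m = r := by
    have hre : ∑ k ∈ Finset.range m, (r + k) / m = ∑ k ∈ Finset.Ico r (r + m), k / m := by
      rw [Finset.sum_Ico_eq_sum_range]
      have hd : r + m - r = m := by omega
      rw [hd]
    have hsplit : ∑ k ∈ Finset.Ico r (r + m), k / m =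
        ∑ k ∈ Finset.Ico r m, k / m + ∑ k ∈ Finset.Ico m (r + m), k / m :=
      (Finset.sum_Ico_consecutive (fun k => k / m) (le_of_lt hr) (by omega)).symm
    have e1 : ∑ k ∈ Finset.Ico r m, k / m = 0 :=
      Finset.sum_eq_zero fun k hk => Nat.div_eq_of_lt (Finset.mem_Ico.mp hk).2
    have e2 : ∑ k ∈ Finset.Ico m (r + m), k / m = r := by
      have hone : ∀ k ∈ Finset.Ico m (r + m), k / m = 1 := fun k hk => by
        have hk' := Finset.mem_Ico.mp hk
        exact Nat.div_eq_of_lt_le (by omega) (by omega)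
      rw [Finset.sum_congr rfl hone, Finset.sum_const, Nat.card_Ico, smul_eq_mul]
      omega
    omega
  omega

/-- Gap bound for strictly monotone maps into `ℕ`. -/
lemma strictMono_gap {m : ℕ} (f : Fin m → ℕ) (hf : StrictMono f) :
    ∀ d (i j : Fin m), (j : ℕ) = (i : ℕ) + d → f i + d ≤ f j := by
  intro d
  induction d with
  | zero =>
    intro i j h
    have hij : i = j := Fin.ext (by omega)
    rw [hij]
    omega
  | succ d ih =>
    intro i j h
    have hj' : (i : ℕ) + d < m := by have := j.isLt; omega
    have h1 := ih i ⟨(i : ℕ) + d, hj'⟩ rfl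
    have h2 : f ⟨(i : ℕ) + d, hj'⟩ < f j := hf (by simp [Fin.lt_def]; omega)
    omega

set_option maxHeartbeats 1000000 in
/-- Let `m` be a positive integer and `c 1, ..., c m` pairwise distinct positive
integers with maximum `cstar`. Then `∑ j, ⌈c j / m⌉ ≤ cstar`. -/
theorem stmt_0 (m : ℕ) (hm : 0 < m) (c : Fin m → ℕ)
    (hpos : ∀ j, 0 < c j) (hinj : Function.Injective c)
    (cstar : ℕ) (hub : ∀ j, c j ≤ cstar) (hmem : ∃ j, c j = cstar) :
    (∑ j, ⌈(c j : ℚ) / m⌉) ≤ (cstar : ℤ) := by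
  -- step 1: bound each ceiling by a natural-number ceiling division
  have hceil : ∀ j, ⌈(c j : ℚ) / m⌉ ≤ ((c j + m - 1) / m : ℕ) := by
    intro j
    rw [Int.ceil_le]
    have hq : (c j : ℕ) ≤ m * ((c j + m - 1) / m) := by
      have h1 := Nat.lt_mul_div_succ (c j + m - 1) hm
      rw [Nat.mul_add, Nat.mul_one] at h1
      set b := m * ((c j + m - 1) / m) with hb
      omega
    rw [div_le_iff₀ (by positivity)]
    push_cast
    calc (c j : ℚ) ≤ (m * ((c j + m - 1) / m) : ℕ) := by exact_mod_cast hq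
      _ = ((c j + m - 1 : ℕ) / m : ℕ) * m := by push_cast; ring
  have key : ∑ j, ((c j + m - 1) / m : ℕ) ≤ cstar := by
    -- reindex by the sorted order iso
    set s : Finset ℕ := Finset.image c Finset.univ with hs
    have hcard : s.card = m := by
      rw [hs, Finset.card_image_of_injective _ hinj, Finset.card_univ, Fintype.card_fin]
    set f : Fin m → ℕ := fun k => (s.orderIsoOfFin hcard k : ℕ) with hf
    have hfmono : StrictMono f := fun a b hab => by
      exact_mod_cast (s.orderIsoOfFin hcard).strictMono hab
    have hfmem : ∀ k, f k ∈ s := fun k => (s.orderIsoOfFin hcard k).2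
    have hflast : ∀ k : Fin m, f k + (m - 1 - (k : ℕ)) ≤ cstar := by
      intro k
      have h1 := strictMono_gap f hfmono (m - 1 - (k : ℕ)) k ⟨m - 1, by omega⟩
        (by simp only []; have := k.isLt; omega)
      have h2 : f ⟨m - 1, by omega⟩ ≤ cstar := by
        obtain ⟨j, hj⟩ := Finset.mem_image.mp (hfmem ⟨m - 1, by omega⟩)
        rw [← hj.2]; exact hub j
      omega
    have hsum_eq : ∑ j, ((c j + m - 1) / m : ℕ) = ∑ k, ((f k + m - 1) / m : ℕ) := by
      have e1 : ∑ v ∈ s, ((v + m - 1) / m) = ∑ j, ((c j + m - 1) / m : ℕ) :=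
        Finset.sum_image (fun x _ y _ h => hinj h)
      have e2 : ∑ x : {x // x ∈ s}, (((x : ℕ) + m - 1) / m) = ∑ v ∈ s, ((v + m - 1) / m) :=
        Finset.sum_coe_sort s (fun v => (v + m - 1) / m)
      have e3 : ∑ k : Fin m, (((s.orderIsoOfFin hcard k : ℕ)) + m - 1) / m
          = ∑ x : {x // x ∈ s}, (((x : ℕ) + m - 1) / m) :=
        Fintype.sum_equiv (s.orderIsoOfFin hcard).toEquiv _ _ (fun k => rfl)
      rw [← e1, ← e2, ← e3]
    rw [hsum_eq]
    calc ∑ k, ((f k + m - 1) / m : ℕ)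
        ≤ ∑ k : Fin m, (cstar + (k : ℕ)) / m := by
          apply Finset.sum_le_sum
          intro k _
          apply Nat.div_le_div_right
          have := hflast k
          have := k.isLt
          omega
      _ = ∑ k ∈ Finset.range m, (cstar + k) / m := by
          rw [Finset.sum_range fun k => (cstar + k) / m]
      _ = cstar := hermite_sum m hm cstar
  calc (∑ j, ⌈(c j : ℚ) / m⌉) ≤ ∑ j, (((c j + m - 1) / m : ℕ) : ℤ) :=
        Finset.sum_le_sum fun j _ => hceil j
    _ = ((∑ j, ((c j + m - 1) / m : ℕ) : ℕ) : ℤ) := by push_cast; ring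
    _ ≤ (cstar : ℤ) := by exact_mod_cast key
end

section
/- For every pair of positive integers n and m there exists a feasible unit open shop schedule with n jobs and m machines (integer start times t(i,j), injective in j for each fixed i, injective in i for each fixed j) whose total sum of completion times equals ∑_{k=1}^{n} m·⌈k/m⌉, and moreover in this schedule machine 1's n operations occupy exactly the time slots 0, 1, ..., n−1 (machine 1 never idles) and job i completes at time C_i = m·⌈π(i)/m⌉ where π(i) is the position of job i's operation on machine 1. -/
lemma ceil_aux (k m : ℕ) (hm : 0 < m) :
    ⌈(k : ℚ) / m⌉ = ((k + m - 1) / m : ℕ) := by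
  have hmQ : (0 : ℚ) < m := by exact_mod_cast hm
  have hdm := Nat.div_add_mod (k + m - 1) m
  have hr : (k + m - 1) % m < m := Nat.mod_lt _ hm
  have h1 : k ≤ m * ((k + m - 1) / m) := by omega
  have h2 : m * ((k + m - 1) / m) < k + m := by omega
  have h1Q : (k : ℚ) ≤ m * ((k + m - 1) / m : ℕ) := by exact_mod_cast h1
  have h2Q : (m : ℚ) * ((k + m - 1) / m : ℕ) < k + m := by exact_mod_cast h2
  rw [Int.ceil_eq_iff]
  constructor
  · rw [lt_div_iff₀ hmQ, Int.cast_natCast]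
    nlinarith
  · rw [div_le_iff₀ hmQ, Int.cast_natCast]
    nlinarith

lemma sup_aux (m q c : ℕ) (hm : 0 < m) (hc : c < m) :
    (Finset.univ.sup fun j : Fin m => q * m + (c + ↑j) % m + 1) = q * m + m := by
  apply le_antisymm
  · apply Finset.sup_le
    intro j _
    have : (c + ↑j) % m < m := Nat.mod_lt _ hm
    omega
  · have hj : (m - 1 - c : ℕ) < m := by omega
    have := Finset.le_sup (f := fun j : Fin m => q * m + (c + ↑j) % m + 1)
      (Finset.mem_univ (⟨m - 1 - c, hj⟩ : Fin m))
    have hv : (c + (m - 1 - c)) % m = m - 1 := by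
      rw [Nat.mod_eq_of_lt (by omega)]
      omega
    simp only [hv] at this
    omega

/-- Existence of an optimal unit open shop schedule (Algorithm 1): a feasible
schedule whose total completion time equals `∑_{k=1}^n m ⌈k/m⌉`, in which
machine `1` occupies exactly the slots `0, ..., n-1` and each job `i` completes
exactly at time `m ⌈π(i)/m⌉`, where `π(i) = t i 1 + 1` is the position of job
`i` on machine `1`. -/
theorem stmt_8 (n m : ℕ) (hn : 0 < n) (hm : 0 < m) :
    ∃ t : Fin n → Fin m → ℕ,
      (∀ i, Function.Injective (t i)) ∧
      (∀ j, Function.Injective fun i => t i j) ∧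
      (∀ i, t i ⟨0, hm⟩ < n) ∧
      (∀ i, ((Finset.univ.sup fun j => t i j + 1 : ℕ) : ℤ)
          = (m : ℤ) * ⌈((t i ⟨0, hm⟩ + 1 : ℕ) : ℚ) / m⌉) ∧
      ((∑ i, (Finset.univ.sup fun j => t i j + 1) : ℕ) : ℤ)
          = ∑ k ∈ Finset.Icc 1 n, (m : ℤ) * ⌈(k : ℚ) / m⌉ := by
  refine ⟨fun i j => (↑i / m) * m + ((↑i % m + ↑j) % m), ?_, ?_, ?_, ?_, ?_⟩
  · -- injective in j
    intro i j₁ j₂ h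
    simp only at h
    have h1 : Nat.ModEq m (↑i % m + ↑j₁) (↑i % m + ↑j₂) := by
      show (↑i % m + ↑j₁) % m = (↑i % m + ↑j₂) % m
      omega
    have e1 : Nat.ModEq m (↑j₁ : ℕ) (↑j₂ : ℕ) :=
      Nat.ModEq.add_left_cancel' (↑i % m) h1
    have e2 : (↑j₁ : ℕ) % m = (↑j₂ : ℕ) % m := e1
    rw [Nat.mod_eq_of_lt j₁.isLt, Nat.mod_eq_of_lt j₂.isLt] at e2
    exact Fin.ext e2
  · -- injective in i
    intro j i₁ i₂ h
    simp only at h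
    have hx1 : (↑i₁ % m + ↑j) % m < m := Nat.mod_lt _ hm
    have hx2 : (↑i₂ % m + ↑j) % m < m := Nat.mod_lt _ hm
    have hq : (↑i₁ : ℕ) / m = ↑i₂ / m := by
      rcases Nat.lt_trichotomy ((↑i₁ : ℕ) / m) ((↑i₂ : ℕ) / m) with hlt | h' | hlt
      · have h1 := Nat.mul_le_mul_right m (Nat.succ_le_of_lt hlt)
        have h2 : ((↑i₁ : ℕ) / m).succ * m = (↑i₁ : ℕ) / m * m + m := by
          rw [Nat.succ_eq_add_one]; ring
        omega
      · exact h'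
      · have h1 := Nat.mul_le_mul_right m (Nat.succ_le_of_lt hlt)
        have h2 : ((↑i₂ : ℕ) / m).succ * m = (↑i₂ : ℕ) / m * m + m := by
          rw [Nat.succ_eq_add_one]; ring
        omega
    have hrest : Nat.ModEq m (↑i₁ % m + ↑j) (↑i₂ % m + ↑j) := by
      show (↑i₁ % m + ↑j) % m = (↑i₂ % m + ↑j) % m
      rw [hq] at h
      omega
    have e1 : Nat.ModEq m ((↑i₁ : ℕ) % m) ((↑i₂ : ℕ) % m) :=
      Nat.ModEq.add_right_cancel' (↑j) hrest
    have e2 : (↑i₁ : ℕ) % m % m = (↑i₂ : ℕ) % m % m := e1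
    rw [Nat.mod_eq_of_lt (Nat.mod_lt _ hm), Nat.mod_eq_of_lt (Nat.mod_lt _ hm)] at e2
    have d1 := Nat.div_add_mod (↑i₁ : ℕ) m
    have d2 := Nat.div_add_mod (↑i₂ : ℕ) m
    rw [hq] at d1
    apply Fin.ext
    omega
  · -- machine 1 slots
    intro i
    simp only [Fin.val_mk, Nat.add_zero]
    have h1 : (↑i % m) % m = (↑i : ℕ) % m := Nat.mod_eq_of_lt (Nat.mod_lt _ hm)
    have d := Nat.div_add_mod (↑i : ℕ) m
    have hcm : (↑i : ℕ) / m * m = m * ((↑i : ℕ) / m) := Nat.mul_comm _ _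
    have := i.isLt
    omega
  · -- per-job completion time
    intro i
    have hc : (↑i : ℕ) % m < m := Nat.mod_lt _ hm
    have hsup := sup_aux m (↑i / m) (↑i % m) hm hc
    simp only [hsup]
    have hi0 : (↑i / m) * m + ((↑i % m + (⟨0, hm⟩ : Fin m).val) % m) = (↑i : ℕ) := by
      simp only [Fin.val_mk, Nat.add_zero]
      have h1 : (↑i % m) % m = (↑i : ℕ) % m := Nat.mod_eq_of_lt hc
      have d := Nat.div_add_mod (↑i : ℕ) m
      have hcm : (↑i : ℕ) / m * m = m * ((↑i : ℕ) / m) := Nat.mul_comm _ _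
      omega
    rw [hi0, ceil_aux _ m hm]
    have h2 : ((↑i : ℕ) + 1 + m - 1) / m = ↑i / m + 1 := by
      rw [show (↑i : ℕ) + 1 + m - 1 = ↑i + m by omega, Nat.add_div_right _ hm]
    rw [h2]
    push_cast
    ring
  · -- total
    have hterm : ∀ i : Fin n,
        (Finset.univ.sup fun j : Fin m =>
          (↑i / m) * m + ((↑i % m + ↑j) % m) + 1) = (↑i / m) * m + m := by
      intro i
      exact sup_aux m (↑i / m) (↑i % m) hm (Nat.mod_lt _ hm)
    simp only [hterm]
    rw [show Finset.Icc 1 n = Finset.Ico 1 (n + 1) by rw [Finset.Ico_add_one_right_eq_Icc],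
      Finset.sum_Ico_eq_sum_range]
    have hR : ∀ k ∈ Finset.range (n + 1 - 1),
        (m : ℤ) * ⌈((1 + k : ℕ) : ℚ) / m⌉ = (m : ℤ) * ((k / m : ℕ) + 1) := by
      intro k _
      rw [show ((1 + k : ℕ) : ℚ) = (((1 + k : ℕ) : ℕ) : ℚ) by norm_num,
        ceil_aux _ m hm]
      have h3 : (1 + k + m - 1) / m = k / m + 1 := by
        rw [show 1 + k + m - 1 = k + m by omega, Nat.add_div_right _ hm]
      rw [h3]
      push_cast
      ring
    rw [Finset.sum_congr rfl hR]
    rw [Fin.sum_univ_eq_sum_range (fun i => (i / m) * m + m)]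
    push_cast
    apply Finset.sum_congr rfl
    intro k _
    ring
end

section
/- The three-player TU-game v on N = {1,2,3} defined by v(∅) = 0, v({1}) = 0, v({2}) = 3, v({3}) = 1, v({1,2}) = 3, v({1,3}) = 1, v({2,3}) = 3, v(N) = 3 has an empty core: there is no x ∈ ℝ³ with x₁ + x₂ + x₃ = 3, x₁ ≥ 0, x₂ ≥ 3, and x₃ ≥ 1. -/
/-- The three-player game with `v(∅)=0, v{1}=0, v{2}=3, v{3}=1, v{1,2}=3,
v{1,3}=1, v{2,3}=3, v(N)=3` has an empty core. -/
theorem stmt_11 (v : Finset (Fin 3) → ℝ)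
    (h0 : v ∅ = 0) (h1 : v {0} = 0) (h2 : v {1} = 3) (h3 : v {2} = 1)
    (h12 : v {0, 1} = 3) (h13 : v {0, 2} = 1) (h23 : v {1, 2} = 3)
    (hN : v Finset.univ = 3) :
    ¬ ∃ x : Fin 3 → ℝ,
        (∑ i, x i) = v Finset.univ ∧ ∀ S : Finset (Fin 3), v S ≤ ∑ i ∈ S, x i := by
  rintro ⟨x, heff, hcore⟩
  have ha := hcore {0}
  have hb := hcore {1}
  have hc := hcore {2}
  simp [h1, h2, h3, Fin.sum_univ_three, hN] at ha hb hc heff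
  linarith
end
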